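/- Let p be a prime. The number of p-tuples (β_0,…,β_{p−1}) of permutations of F_p for which there exist a permutation μ of F_p, a cycle C of length p in the symmetric group on F_p, and a bijection π : {0,…,p−1} → {0,…,p−1} such that β_n = μ ∘ C^{π(n)} for all n (i.e., the tuples that are equivalent to a 0-Klenian polynomial tuple) equals p! · (p−1)! · (p−2)!. -/

import Mathlib

open Equiv Equiv.Perm

namespace Stmt5Aux

variable {p : ℕ} [hp : Fact p.Prime]


/-- the standard p-cycle x ↦ x+1 on ZMod p -/
def cc (p : ℕ) : Equiv.Perm (ZMod p) := Equiv.addRight 1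

lemma cc_apply (x : ZMod p) : cc p x = x + 1 := rfl

lemma cc_pow_apply (m : ℕ) (x : ZMod p) : ((cc p) ^ m) x = x + m := by
  induction m with
  | zero => simp
  | succ n ih =>
    rw [pow_succ', Perm.mul_apply, ih, cc_apply]
    push_cast
    ring

lemma cc_isCycle : (cc p).IsCycle := by
  refine ⟨0, by simp [cc_apply], fun y hy => ⟨(y.val : ℤ), ?_⟩⟩
  rw [zpow_natCast, cc_pow_apply, zero_add, ZMod.natCast_val, ZMod.cast_id]

lemma cc_support : (cc p).support = Finset.univ := by
  refine Finset.eq_univ_iff_forall.2 fun x => ?_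
  simp [Perm.mem_support, cc_apply]

lemma cc_support_card : (cc p).support.card = p := by
  rw [cc_support, Finset.card_univ, ZMod.card]

noncomputable def conjMap : {g : Equiv.Perm (ZMod p) // g 0 = 0} →
    {C : Equiv.Perm (ZMod p) // C.IsCycle ∧ C.support.card = p} :=
  fun g => ⟨g.1 * cc p * g.1⁻¹, cc_isCycle.conj, by rw [card_support_conj, cc_support_card]⟩

lemma conjMap_bijective : Function.Bijective (conjMap (p := p)) := by
  constructor
  · rintro ⟨g, hg⟩ ⟨h, hh⟩ heq
    simp only [conjMap, Subtype.mk.injEq] at heq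
    set u : Equiv.Perm (ZMod p) := h⁻¹ * g with hu
    have hcomm : u * cc p = cc p * u := by
      have : g * cc p = h * cc p * h⁻¹ * g := by
        rw [← heq]; group
      rw [hu]; group
      rw [mul_assoc, this]; group
    have hstep : ∀ x : ZMod p, u (x + 1) = u x + 1 := by
      intro x
      have := congrFun (congrArg (fun (e : Equiv.Perm (ZMod p)) => (e : ZMod p → ZMod p)) hcomm) x
      simpa [Perm.mul_apply, cc_apply] using this
    have hu0 : u 0 = 0 := by
      have : h⁻¹ (g 0) = h⁻¹ 0 := by rw [hg]
      rw [hu, Perm.mul_apply, hg, Perm.inv_eq_iff_eq, hh]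
    have hnat : ∀ m : ℕ, u (m : ZMod p) = m := by
      intro m
      induction m with
      | zero => simpa using hu0
      | succ n ih => push_cast; rw [hstep, ih]
    have : u = 1 := by
      ext x
      have := hnat x.val
      rwa [ZMod.natCast_val, ZMod.cast_id] at this
    exact Subtype.ext (by rw [hu, inv_mul_eq_one] at this; exact this.symm)
  · rintro ⟨C, hC, hCs⟩
    have horder : orderOf C = p := hC.orderOf.trans hCs
    have hsupp : C.support = Finset.univ :=
      Finset.eq_univ_of_card _ (by rw [hCs, ZMod.card])
    have hC0 : C 0 ≠ 0 := by
      have : (0 : ZMod p) ∈ C.support := hsupp ▸ Finset.mem_univ _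
      exact Perm.mem_support.mp this
    set g0 : ZMod p → ZMod p := fun x => (C ^ x.val) 0 with hg0
    have hinj : Function.Injective g0 := by
      intro x y hxy
      have hpow : C ^ x.val = C ^ y.val := hC.pow_eq_pow_iff.mpr ⟨0, hC0, hxy⟩
      have hmod := pow_eq_pow_iff_modEq.mp hpow
      rw [horder] at hmod
      have : x.val = y.val := by
        have := hmod
        unfold Nat.ModEq at this
        rwa [Nat.mod_eq_of_lt (ZMod.val_lt x), Nat.mod_eq_of_lt (ZMod.val_lt y)] at this
      exact ZMod.val_injective p this
    let g : Equiv.Perm (ZMod p) := Equiv.ofBijective g0 (Finite.injective_iff_bijective.mp hinj)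
    have hgval : ∀ x, g x = (C ^ x.val) 0 := fun x => rfl
    have hgz : g 0 = 0 := by rw [hgval, ZMod.val_zero, pow_zero, Perm.one_apply]
    refine ⟨⟨g, hgz⟩, ?_⟩
    apply Subtype.ext
    show g * cc p * g⁻¹ = C
    have key : ∀ x, g (cc p x) = C (g x) := by
      intro x
      rw [cc_apply, hgval, hgval]
      have hval : (x + 1).val = (x.val + 1) % p := by
        rw [ZMod.val_add, ZMod.val_one]
      have hmod : C ^ ((x.val + 1) % p) = C ^ (x.val + 1) := by
        have := pow_mod_orderOf C (x.val + 1)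
        rwa [horder] at this
      rw [hval, hmod, pow_succ', Perm.mul_apply]
    ext x
    have := key (g⁻¹ x)
    rw [show g (g⁻¹ x) = x from g.apply_symm_apply x] at this
    simpa [Perm.mul_apply] using this

lemma card_fix_zero : Nat.card {g : Equiv.Perm (ZMod p) // g 0 = 0} = (p - 1).factorial := by
  have e1 : {g : Equiv.Perm (ZMod p) // g 0 = 0} ≃
      {f : Equiv.Perm (ZMod p) // ∀ a, ¬(a ≠ 0) → f a = a} :=
    Equiv.subtypeEquivRight (by
      intro f
      constructor
      · intro hf
        intro a ha
        rw [not_not] at ha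
        subst ha; exact hf
      · intro hf
        exact hf 0 (by simp))
  have e2 : Equiv.Perm {x : ZMod p // x ≠ 0} ≃
      {f : Equiv.Perm (ZMod p) // ∀ a, ¬(a ≠ 0) → f a = a} :=
    Equiv.Perm.subtypeEquivSubtypePerm _
  have hcard : Fintype.card {x : ZMod p // x ≠ 0} = p - 1 := by
    rw [Fintype.card_subtype_compl, ZMod.card, Fintype.card_subtype_eq]
  rw [Nat.card_congr (e1.trans e2.symm), Nat.card_eq_fintype_card, Fintype.card_perm, hcard]

lemma card_cycles :
    Nat.card {C : Equiv.Perm (ZMod p) // C.IsCycle ∧ C.support.card = p} = (p - 1).factorial := by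
  rw [← Nat.card_eq_of_bijective _ conjMap_bijective, card_fix_zero]



lemma fin_val_one : ((1 : Fin p) : ℕ) = 1 := by
  have h2 := hp.out.two_le
  rcases p with _|_|n
  · omega
  · omega
  · exact Fin.val_one _

lemma fin_zero_ne_one : (0 : Fin p) ≠ 1 := by
  intro h
  have := congrArg Fin.val h
  rw [fin_val_one] at this
  simp at this

lemma card_fix_two :
    Nat.card {e : Equiv.Perm (Fin p) // e 0 = 0 ∧ e 1 = 1} = (p - 2).factorial := by
  have e1 : {e : Equiv.Perm (Fin p) // e 0 = 0 ∧ e 1 = 1} ≃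
      {f : Equiv.Perm (Fin p) // ∀ a, ¬(a ≠ 0 ∧ a ≠ 1) → f a = a} :=
    Equiv.subtypeEquivRight (by
      intro f
      constructor
      · rintro ⟨h0, h1⟩ a ha
        rcases not_and_or.mp ha with h | h <;> rw [not_not] at h <;> subst h <;> assumption
      · intro hf
        exact ⟨hf 0 (by simp), hf 1 (by simp)⟩)
  have e2 : Equiv.Perm {a : Fin p // a ≠ 0 ∧ a ≠ 1} ≃
      {f : Equiv.Perm (Fin p) // ∀ a, ¬(a ≠ 0 ∧ a ≠ 1) → f a = a} :=
    Equiv.Perm.subtypeEquivSubtypePerm _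
  have hfil : (Finset.univ.filter (fun a : Fin p => a ≠ 0 ∧ a ≠ 1)) =
      Finset.univ \ {0, 1} := by
    ext a
    simp [and_comm]
  have hcard : Fintype.card {a : Fin p // a ≠ 0 ∧ a ≠ 1} = p - 2 := by
    rw [Fintype.card_subtype, hfil, Finset.card_sdiff_of_subset (Finset.subset_univ _),
      Finset.card_univ, Fintype.card_fin]
    congr 1
    rw [Finset.card_insert_of_notMem (by simpa using fin_zero_ne_one), Finset.card_singleton]
  rw [Nat.card_congr (e1.trans e2.symm), Nat.card_eq_fintype_card, Fintype.card_perm, hcard]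

/-- the natural equivalence `Fin p ≃ ZMod p` -/
def zeq : Fin p ≃ ZMod p where
  toFun n := ((n : ℕ) : ZMod p)
  invFun x := ⟨x.val, ZMod.val_lt x⟩
  left_inv n := Fin.ext (ZMod.val_cast_of_lt n.isLt)
  right_inv x := by simp [ZMod.natCast_val, ZMod.cast_id]

lemma zeq_symm_val (x : ZMod p) : ((zeq.symm x : Fin p) : ℕ) = x.val := rfl

abbrev Tup := {β : Fin p → Equiv.Perm (ZMod p) //
      ∃ (μ C : Equiv.Perm (ZMod p)) (π : Equiv.Perm (Fin p)),
        C.IsCycle ∧ C.support.card = p ∧ ∀ n : Fin p, β n = μ * C ^ ((π n : ℕ))}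

noncomputable def F :
    Equiv.Perm (ZMod p) × {C : Equiv.Perm (ZMod p) // C.IsCycle ∧ C.support.card = p} ×
      {e : Equiv.Perm (Fin p) // e 0 = 0 ∧ e 1 = 1} → Tup (p := p) :=
  fun x => ⟨fun n => x.1 * x.2.1.1 ^ ((x.2.2.1 n : ℕ)),
    ⟨x.1, x.2.1.1, x.2.2.1, x.2.1.2.1, x.2.1.2.2, fun _ => rfl⟩⟩

lemma F_bijective : Function.Bijective (F (p := p)) := by
  constructor
  · rintro ⟨μ, ⟨C, hC, hCs⟩, ⟨e, he0, he1⟩⟩ ⟨μ', ⟨C', hC', hCs'⟩, ⟨e', he0', he1'⟩⟩ heq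
    simp only [F, Subtype.mk.injEq] at heq
    have happ : ∀ n : Fin p, μ * C ^ ((e n : ℕ)) = μ' * C' ^ ((e' n : ℕ)) :=
      fun n => congrFun heq n
    have hμ : μ = μ' := by
      have := happ 0
      rwa [he0, he0', Fin.val_zero, pow_zero, pow_zero, mul_one, mul_one] at this
    subst hμ
    have hCeq : C = C' := by
      have := happ 1
      rwa [he1, he1', fin_val_one, pow_one, pow_one, mul_left_cancel_iff] at this
    subst hCeq
    have horder : orderOf C = p := hC.orderOf.trans hCs
    have he : e = e' := by
      ext n
      have h1 : C ^ ((e n : ℕ)) = C ^ ((e' n : ℕ)) := mul_left_cancel (happ n)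
      have h2 : ((e n : Fin p) : ℕ) = ((e' n : Fin p) : ℕ) :=
        pow_injOn_Iio_orderOf (by rw [horder]; exact Set.mem_Iio.mpr (e n).isLt)
          (by rw [horder]; exact Set.mem_Iio.mpr (e' n).isLt) h1
      exact h2
    subst he
    rfl
  · rintro ⟨β, μ, C, π, hC, hCs, hβ⟩
    have horder : orderOf C = p := hC.orderOf.trans hCs
    set kz : ZMod p := zeq (π 0) with hkz
    set lz : ZMod p := zeq (π 1) with hlz
    set a : ZMod p := lz - kz with ha_def
    have hπne : π 1 ≠ π 0 := by
      intro h
      have := π.injective h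
      exact absurd (congrArg Fin.val this) (by rw [fin_val_one]; simp)
    have ha : a ≠ 0 := by
      rw [ha_def, sub_ne_zero]
      intro h
      exact hπne (zeq.injective (hlz ▸ hkz ▸ h))
    have haval_pos : 0 < a.val := Nat.pos_of_ne_zero (fun h => ha (by
      have := ZMod.natCast_rightInverse (n := p) a
      rw [← this, h]; simp))
    have haval_lt : a.val < p := ZMod.val_lt a
    -- the cycle C' = C ^ a.val
    set C' : Equiv.Perm (ZMod p) := C ^ a.val with hC'_def
    have hC' : C'.IsCycle := hC.isCycle_pow_pos_of_lt_prime_order (by rw [horder]; exact hp.out)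
      a.val haval_pos (by rw [horder]; exact haval_lt)
    have hgcd : Nat.gcd p a.val = 1 := Nat.Coprime.gcd_eq_one
      ((Nat.Prime.coprime_iff_not_dvd hp.out).mpr (Nat.not_dvd_of_pos_of_lt haval_pos haval_lt))
    have horder' : orderOf C' = p := by
      rw [hC'_def, orderOf_pow, horder, hgcd, Nat.div_one]
    have hCs' : C'.support.card = p := by rw [← hC'.orderOf, horder']
    -- the exponent permutation
    set ψ : Equiv.Perm (ZMod p) :=
      (Equiv.subRight kz).trans (Equiv.mulLeft₀ a⁻¹ (inv_ne_zero ha)) with hψ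
    set e : Equiv.Perm (Fin p) := π.trans (zeq.trans (ψ.trans zeq.symm)) with he_def
    have he_apply : ∀ n, e n = zeq.symm (a⁻¹ * (zeq (π n) - kz)) := fun n => rfl
    have he0 : e 0 = 0 := by
      rw [he_apply, ← hkz, sub_self, mul_zero]
      exact Fin.ext (by rw [zeq_symm_val, ZMod.val_zero, Fin.val_zero])
    have he1 : e 1 = 1 := by
      rw [he_apply, ← hlz, ← ha_def, inv_mul_cancel₀ ha]
      exact Fin.ext (by rw [zeq_symm_val, ZMod.val_one, fin_val_one])
    refine ⟨⟨μ * C ^ ((π 0 : ℕ)), ⟨C', hC', hCs'⟩, ⟨e, he0, he1⟩⟩, ?_⟩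
    apply Subtype.ext
    funext n
    show μ * C ^ ((π 0 : ℕ)) * C' ^ ((e n : ℕ)) = β n
    rw [hβ n, hC'_def, ← pow_mul, mul_assoc, ← pow_add]
    congr 1
    rw [pow_eq_pow_iff_modEq, horder]
    have : ((((π 0 : ℕ)) + a.val * ((e n : ℕ)) : ℕ) : ZMod p) = (((π n : ℕ) : ℕ) : ZMod p) := by
      push_cast
      rw [he_apply, zeq_symm_val]
      have hv1 : ((a.val : ℕ) : ZMod p) = a := ZMod.natCast_rightInverse a
      have hv2 : (((a⁻¹ * (zeq (π n) - kz)).val : ℕ) : ZMod p) = a⁻¹ * (zeq (π n) - kz) :=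
        ZMod.natCast_rightInverse _
      rw [hv1, hv2, mul_inv_cancel_left₀ ha]
      show kz + (zeq (π n) - kz) = zeq (π n)
      ring
    exact (ZMod.natCast_eq_natCast_iff _ _ _).mp this


end Stmt5Aux

theorem stmt5 {p : ℕ} [Fact (Nat.Prime p)] :
    Nat.card {β : Fin p → Equiv.Perm (ZMod p) //
      ∃ (μ C : Equiv.Perm (ZMod p)) (π : Equiv.Perm (Fin p)),
        C.IsCycle ∧ C.support.card = p ∧ ∀ n : Fin p, β n = μ * C ^ ((π n : ℕ))} =
    p.factorial * (p - 1).factorial * (p - 2).factorial := by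
  rw [← Nat.card_eq_of_bijective _ Stmt5Aux.F_bijective, Nat.card_prod, Nat.card_prod,
    Stmt5Aux.card_cycles, Stmt5Aux.card_fix_two, Nat.card_eq_fintype_card,
    Fintype.card_perm, ZMod.card, ← mul_assoc]
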